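/- Let G be a simple graph on n vertices with matching number β. If n > 2β, then the number of edges of G is at most the maximum of C(2β+1, 2) and C(β, 2) + β(n − β). -/

import Mathlib

open SimpleGraph

/-- The matching number of a graph: the maximum size of a matching. -/
noncomputable def matchNum {V : Type*} (G : SimpleGraph V) : ℕ :=
  sSup {k : ℕ | ∃ M : G.Subgraph, M.IsMatching ∧ M.edgeSet.ncard = k}

namespace ErdosGallaiAux

attribute [local instance] Classical.propDecidable
set_option linter.unusedSectionVars false

variable {V : Type*} [Fintype V]

/-- `v` is not covered by any edge of `m`. -/
def expos (m : Finset (Sym2 V)) (v : V) : Prop := ∀ e ∈ m, v ∉ e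

/-- `m` is a matching of `G` inside the vertex set `s`. -/
def IsMF (G : SimpleGraph V) (s : Finset V) (m : Finset (Sym2 V)) : Prop :=
  (∀ e ∈ m, e ∈ G.edgeSet) ∧ (∀ e ∈ m, ∀ v ∈ e, v ∈ s) ∧
  (∀ e ∈ m, ∀ f ∈ m, e ≠ f → ∀ v ∈ e, v ∉ f)

variable {G : SimpleGraph V} {s t : Finset V} {m m' : Finset (Sym2 V)}

lemma IsMF.subset (h : IsMF G s m) (hsub : m' ⊆ m) : IsMF G s m' :=
  ⟨fun e he => h.1 e (hsub he), fun e he => h.2.1 e (hsub he),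
   fun e he f hf hef => h.2.2 e (hsub he) f (hsub hf) hef⟩

lemma IsMF.mono_s (h : IsMF G s m) (hst : s ⊆ t) : IsMF G t m :=
  ⟨h.1, fun e he v hv => hst (h.2.1 e he v hv), h.2.2⟩

lemma expos_anti (hsub : m' ⊆ m) (h : expos m v) : expos m' v :=
  fun e he => h e (hsub he)

lemma IsMF.unique (h : IsMF G s m) {e f : Sym2 V} (he : e ∈ m) (hf : f ∈ m)
    {v : V} (hve : v ∈ e) (hvf : v ∈ f) : e = f := by
  by_contra hne
  exact h.2.2 e he f hf hne v hve hvf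

/-- Adding an edge whose two endpoints are exposed. -/
lemma IsMF.insert_edge (h : IsMF G s m) {a b : V} (hab : G.Adj a b)
    (ha : a ∈ s) (hb : b ∈ s) (hea : expos m a) (heb : expos m b) :
    IsMF G s (insert s(a, b) m) ∧ (insert s(a, b) m).card = m.card + 1 := by
  have hnm : s(a, b) ∉ m := fun hmem => hea _ hmem (Sym2.mem_mk_left a b)
  refine ⟨⟨?_, ?_, ?_⟩, Finset.card_insert_of_notMem hnm⟩
  · intro e he
    rcases Finset.mem_insert.1 he with rfl | he
    · exact G.mem_edgeSet.2 hab
    · exact h.1 e he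
  · intro e he v hv
    rcases Finset.mem_insert.1 he with rfl | he
    · rcases Sym2.mem_iff.1 hv with rfl | rfl
      · exact ha
      · exact hb
    · exact h.2.1 e he v hv
  · intro e he f hf hef v hve hvf
    rcases Finset.mem_insert.1 he with rfl | he'
    · rcases Finset.mem_insert.1 hf with rfl | hf'
      · exact hef rfl
      · rcases Sym2.mem_iff.1 hve with rfl | rfl
        · exact hea _ hf' hvf
        · exact heb _ hf' hvf
    · rcases Finset.mem_insert.1 hf with rfl | hf'
      · rcases Sym2.mem_iff.1 hvf with rfl | rfl
        · exact hea _ he' hve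
        · exact heb _ he' hve
      · exact h.2.2 e he' f hf' hef v hve hvf

/-- Every edge of a matching is a proper edge with endpoints in `s`. -/
lemma IsMF.edge_form (h : IsMF G s m) {e : Sym2 V} (he : e ∈ m) :
    ∃ a b : V, a ≠ b ∧ e = s(a, b) ∧ a ∈ s ∧ b ∈ s ∧ G.Adj a b := by
  induction e with
  | _ a b =>
    have hadj : G.Adj a b := G.mem_edgeSet.1 (h.1 _ he)
    exact ⟨a, b, hadj.ne, rfl, h.2.1 _ he a (Sym2.mem_mk_left a b),
      h.2.1 _ he b (Sym2.mem_mk_right a b), hadj⟩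

/-- Getting the partner of a covered vertex. -/
lemma IsMF.partner (h : IsMF G s m) {v : V} (hv : ¬ expos m v) :
    ∃ w : V, w ≠ v ∧ s(v, w) ∈ m ∧ G.Adj v w ∧ v ∈ s ∧ w ∈ s ∧
      (∀ f ∈ m, v ∈ f → f = s(v, w)) := by
  rw [expos] at hv
  push_neg at hv
  obtain ⟨e, he, hve⟩ := hv
  have hspec : s(v, Sym2.Mem.other' hve) = e := Sym2.other_spec' hve
  set w := Sym2.Mem.other' hve with hw
  have hmem : s(v, w) ∈ m := hspec ▸ he
  have hadj : G.Adj v w := G.mem_edgeSet.1 (h.1 _ hmem)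
  refine ⟨w, hadj.ne', hmem, hadj, h.2.1 _ hmem v (Sym2.mem_mk_left v w),
    h.2.1 _ hmem w (Sym2.mem_mk_right v w), ?_⟩
  intro f hf hvf
  exact (h.unique hf hmem hvf (Sym2.mem_mk_left v w)).symm ▸ rfl

/-- The set of covered vertices, as a finset. -/
noncomputable def cover (m : Finset (Sym2 V)) : Finset V :=
  m.biUnion (fun e => Finset.univ.filter (· ∈ e))

lemma mem_cover {v : V} : v ∈ cover m ↔ ∃ e ∈ m, v ∈ e := by
  simp [cover]

lemma expos_iff_not_mem_cover {v : V} : expos m v ↔ v ∉ cover m := by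
  simp [mem_cover, expos]

lemma IsMF.card_cover (h : IsMF G s m) : (cover m).card = 2 * m.card := by
  rw [cover, Finset.card_biUnion]
  · rw [Finset.sum_congr rfl (fun e he => ?_), Finset.sum_const, smul_eq_mul, mul_comm]
    obtain ⟨a, b, hab, rfl, _, _, _⟩ := h.edge_form he
    have : Finset.univ.filter (· ∈ s(a, b)) = {a, b} := by
      ext v; simp [Sym2.mem_iff]
    rw [this, Finset.card_insert_of_notMem (by simpa using hab), Finset.card_singleton]
  · intro e he f hf hef
    unfold Function.onFun
    rw [Finset.disjoint_left]
    intro v hv hv'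
    simp only [Finset.mem_filter] at hv hv'
    exact h.2.2 e he f hf hef v hv.2 hv'.2

lemma IsMF.cover_subset (h : IsMF G s m) : cover m ⊆ s := by
  intro v hv
  obtain ⟨e, he, hve⟩ := mem_cover.1 hv
  exact h.2.1 e he v hve

lemma IsMF.two_card_le (h : IsMF G s m) : 2 * m.card ≤ s.card := by
  rw [← h.card_cover]
  exact Finset.card_le_card h.cover_subset

/-- Union of matchings on disjoint vertex sets. -/
lemma IsMF.union_disjoint {m₁ m₂ : Finset (Sym2 V)} (h₁ : IsMF G s m₁) (h₂ : IsMF G t m₂)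
    (hst : ∀ v ∈ s, v ∉ t) :
    IsMF G (s ∪ t) (m₁ ∪ m₂) ∧ (m₁ ∪ m₂).card = m₁.card + m₂.card := by
  have hdisj : ∀ e ∈ m₁, e ∉ m₂ := by
    intro e he₁ he₂
    obtain ⟨a, b, hab, rfl, ha, hb, _⟩ := h₁.edge_form he₁
    exact hst a ha (h₂.2.1 _ he₂ a (Sym2.mem_mk_left a b))
  constructor
  · refine ⟨?_, ?_, ?_⟩
    · intro e he
      rcases Finset.mem_union.1 he with he | he
      · exact h₁.1 e he
      · exact h₂.1 e he
    · intro e he v hv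
      rcases Finset.mem_union.1 he with he | he
      · exact Finset.mem_union_left _ (h₁.2.1 e he v hv)
      · exact Finset.mem_union_right _ (h₂.2.1 e he v hv)
    · intro e he f hf hef v hve hvf
      rcases Finset.mem_union.1 he with he' | he'
      · rcases Finset.mem_union.1 hf with hf' | hf'
        · exact h₁.2.2 e he' f hf' hef v hve hvf
        · exact hst v (h₁.2.1 e he' v hve) (h₂.2.1 f hf' v hvf)
      · rcases Finset.mem_union.1 hf with hf' | hf'
        · exact hst v (h₁.2.1 f hf' v hvf) (h₂.2.1 e he' v hve)
        · exact h₂.2.2 e he' f hf' hef v hve hvf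
  · rw [Finset.card_union_of_disjoint (Finset.disjoint_left.2 hdisj)]


lemma choose_two_succ (n : ℕ) : (n + 1).choose 2 = n.choose 2 + n := by
  rw [Nat.choose_succ_succ, Nat.choose_one_right]; exact Nat.add_comm _ _

/-- The edges of `G` inside the vertex set `s`. -/
noncomputable def ES (G : SimpleGraph V) (s : Finset V) : Finset (Sym2 V) :=
  Finset.univ.filter (fun e => e ∈ G.edgeSet ∧ ∀ v ∈ e, v ∈ s)

lemma mem_ES {e : Sym2 V} : e ∈ ES G s ↔ e ∈ G.edgeSet ∧ ∀ v ∈ e, v ∈ s := by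
  simp [ES]

lemma ES_mono (hst : s ⊆ t) : ES G s ⊆ ES G t := by
  intro e he
  rw [mem_ES] at he ⊢
  exact ⟨he.1, fun v hv => hst (he.2 v hv)⟩

lemma IsMF.subset_ES (h : IsMF G s m) : m ⊆ ES G s := by
  intro e he
  exact mem_ES.2 ⟨h.1 e he, h.2.1 e he⟩

/-- Deleting a vertex removes at most `s.card - 1` edges. -/
lemma ES_erase_card (G : SimpleGraph V) {s : Finset V} {v : V} (hv : v ∈ s) :
    (ES G s).card ≤ (ES G (s.erase v)).card + (s.card - 1) := by
  classical
  have hsub : ES G (s.erase v) ⊆ ES G s := ES_mono (Finset.erase_subset v s)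
  have hsplit : (ES G s).card = (ES G (s.erase v)).card + (ES G s \ ES G (s.erase v)).card := by
    rw [add_comm, Finset.card_sdiff_add_card_eq_card hsub]
  rw [hsplit]
  have hkey : (ES G s \ ES G (s.erase v)).card ≤ (s.erase v).card := by
    apply Finset.card_le_card_of_injOn (fun e => if h : v ∈ e then Sym2.Mem.other' h else v)
    · intro e he
      rw [Finset.mem_coe, Finset.mem_sdiff] at he
      obtain ⟨heS, heN⟩ := he
      rw [mem_ES] at heS heN
      push_neg at heN
      obtain ⟨u, hue, hus⟩ := heN heS.1
      have huv : u = v := by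
        have := heS.2 u hue
        by_contra hne
        exact hus (Finset.mem_erase.2 ⟨hne, this⟩)
      subst huv
      beta_reduce
      rw [dif_pos hue]
      refine Finset.mem_erase.2 ⟨?_, heS.2 _ (Sym2.other_mem' hue)⟩
      intro heq
      have hdiag : e.IsDiag := by
        rw [← Sym2.other_spec' hue, heq]
        exact Sym2.mk_isDiag_iff.2 rfl
      exact (SimpleGraph.not_isDiag_of_mem_edgeSet G heS.1) hdiag
    · intro e₁ h₁ e₂ h₂ heq
      rw [Finset.mem_coe, Finset.mem_sdiff] at h₁ h₂
      have hmemv : ∀ (e : Sym2 V), e ∈ ES G s → e ∉ ES G (s.erase v) → v ∈ e := by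
        intro e heS heN
        rw [mem_ES] at heS heN
        push_neg at heN
        obtain ⟨u, hue, hus⟩ := heN heS.1
        have hu : u = v := by
          by_contra hne
          exact hus (Finset.mem_erase.2 ⟨hne, heS.2 u hue⟩)
        exact hu ▸ hue
      have hv₁ : v ∈ e₁ := hmemv e₁ h₁.1 h₁.2
      have hv₂ : v ∈ e₂ := hmemv e₂ h₂.1 h₂.2
      simp only at heq
      rw [dif_pos hv₁, dif_pos hv₂] at heq
      rw [← Sym2.other_spec' hv₁, ← Sym2.other_spec' hv₂, heq]
  have : (s.erase v).card = s.card - 1 := Finset.card_erase_of_mem hv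
  omega

lemma ES_card_le_choose (G : SimpleGraph V) (s : Finset V) :
    (ES G s).card ≤ s.card.choose 2 := by
  classical
  induction s using Finset.induction_on with
  | empty =>
    have : ES G ∅ = ∅ := by
      ext e
      simp only [mem_ES, Finset.notMem_empty, iff_false, not_and]
      intro he h
      induction e with
      | _ a b => exact h a (Sym2.mem_mk_left a b)
    simp [this]
  | @insert a t hx ih =>
    have h1 := ES_erase_card G (s := insert a t) (v := a) (Finset.mem_insert_self a t)
    rw [Finset.erase_insert hx] at h1
    have h2 : (insert a t).card = t.card + 1 := Finset.card_insert_of_notMem hx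
    calc (ES G (insert a t)).card ≤ (ES G t).card + ((insert a t).card - 1) := h1
    _ ≤ t.card.choose 2 + t.card := by omega
    _ = (t.card + 1).choose 2 := (choose_two_succ t.card).symm
    _ = (insert a t).card.choose 2 := by rw [h2]


lemma expos_union {m₁ m₂ : Finset (Sym2 V)} {v : V} :
    expos (m₁ ∪ m₂) v ↔ expos m₁ v ∧ expos m₂ v := by
  simp [expos, Finset.mem_union, or_imp, forall_and]

lemma expos_insert {g : Sym2 V} {m : Finset (Sym2 V)} {v : V} :
    expos (insert g m) v ↔ v ∉ g ∧ expos m v := by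
  simp [expos, Finset.mem_insert, or_imp, forall_and]

set_option maxHeartbeats 2000000 in
/-- The key symmetric-difference exchange lemma: starting from a vertex exposed by `M` but
covered by `N`, either `M` can be augmented, or we find an alternating path leading to a
vertex `w` exposed by `N`, along which both matchings can be switched. -/
lemma SD (G : SimpleGraph V) (s : Finset V) :
    ∀ c : ℕ, ∀ M N : Finset (Sym2 V), ∀ x : V, M.card ≤ c →
    IsMF G s M → IsMF G s N → expos M x → ¬ expos N x →
    (∃ A B : Finset (Sym2 V), A ⊆ N ∧ B ⊆ M ∧
      IsMF G s ((M \ B) ∪ A) ∧ ((M \ B) ∪ A).card = M.card + 1) ∨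
    (∃ (w : V) (A B : Finset (Sym2 V)),
      A ⊆ N ∧ B ⊆ M ∧ (∀ g ∈ A, g ∉ M) ∧ (∀ g ∈ B, g ∉ N) ∧ B.Nonempty ∧
      w ≠ x ∧ expos N w ∧ ¬ expos M w ∧
      (∀ g ∈ A ∪ B, ∀ v ∈ g, v = x ∨ v = w ∨ (¬ expos M v ∧ ¬ expos N v)) ∧
      IsMF G s ((M \ B) ∪ A) ∧ ((M \ B) ∪ A).card = M.card ∧
      expos ((M \ B) ∪ A) w ∧ (∀ v, expos M v → v ≠ x → expos ((M \ B) ∪ A) v) ∧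
      IsMF G s ((N \ A) ∪ B) ∧ ((N \ A) ∪ B).card = N.card ∧
      expos ((N \ A) ∪ B) x) := by
  intro c
  induction c using Nat.strong_induction_on with
  | _ c ih =>
  intro M N x hc hM hN hx hxc
  obtain ⟨x1, hx1x, heN, hadj1, hxs, hx1s, huniqN⟩ := hN.partner hxc
  have hxe : x ∈ s(x, x1) := Sym2.mem_mk_left x x1
  have hx1e : x1 ∈ s(x, x1) := Sym2.mem_mk_right x x1
  have heM : s(x, x1) ∉ M := fun h => hx _ h hxe
  by_cases h1 : expos M x1
  · -- augmenting: just add the edge s(x, x1)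
    left
    refine ⟨{s(x, x1)}, ∅, Finset.singleton_subset_iff.2 heN, Finset.empty_subset M, ?_, ?_⟩
    · have hset : (M \ (∅ : Finset (Sym2 V))) ∪ {s(x, x1)} = insert s(x, x1) M := by
        ext g; simp [or_comm]
      rw [hset]
      exact (hM.insert_edge hadj1 hxs hx1s hx h1).1
    · have hset : (M \ (∅ : Finset (Sym2 V))) ∪ {s(x, x1)} = insert s(x, x1) M := by
        ext g; simp [or_comm]
      rw [hset]
      exact (hM.insert_edge hadj1 hxs hx1s hx h1).2
  · -- x1 is covered by M
    obtain ⟨x2, hx2x1, hfM, hadj2, _, hx2s, huniqM⟩ := hM.partner h1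
    have hx1f : x1 ∈ s(x1, x2) := Sym2.mem_mk_left x1 x2
    have hx2f : x2 ∈ s(x1, x2) := Sym2.mem_mk_right x1 x2
    have hxf : x ∉ s(x1, x2) := hx _ hfM
    have hx2x : x2 ≠ x := fun h => hxf (h ▸ hx2f)
    have hef : s(x, x1) ≠ s(x1, x2) := fun h => hxf (h ▸ hxe)
    have hfN : s(x1, x2) ∉ N := fun h => hef ((hN.unique h heN hx1f hx1e).symm)
    have hx2e : x2 ∉ s(x, x1) := by
      rw [Sym2.mem_iff]
      push_neg
      exact ⟨hx2x, hx2x1⟩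
    have hMcard : 1 ≤ M.card := Finset.card_pos.2 ⟨_, hfM⟩
    -- x1 is exposed in M.erase f and N.erase e; x is exposed in N.erase e
    have hexpMex1 : expos (M.erase s(x1, x2)) x1 := by
      intro g hg hx1g
      rw [Finset.mem_erase] at hg
      exact hg.1 (huniqM g hg.2 hx1g)
    have hexpNex1 : expos (N.erase s(x, x1)) x1 := by
      intro g hg hx1g
      rw [Finset.mem_erase] at hg
      exact hg.1 (hN.unique hg.2 heN hx1g hx1e)
    have hexpNex : expos (N.erase s(x, x1)) x := by
      intro g hg hxg
      rw [Finset.mem_erase] at hg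
      exact hg.1 (huniqN g hg.2 hxg)
    have hexpMex2 : expos (M.erase s(x1, x2)) x2 := by
      intro g hg hx2g
      rw [Finset.mem_erase] at hg
      exact hg.1 ((hM.unique hg.2 hfM hx2g hx2f))
    by_cases h2 : expos N x2
    · -- terminal case: the path is x, x1, x2 with w = x2
      right
      have hsetM : (M \ {s(x1, x2)}) ∪ {s(x, x1)}
          = insert s(x, x1) (M.erase s(x1, x2)) := by
        ext g
        simp only [Finset.mem_union, Finset.mem_sdiff, Finset.mem_singleton, Finset.mem_insert,
          Finset.mem_erase]
        tauto
      have hsetN : (N \ {s(x, x1)}) ∪ {s(x1, x2)}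
          = insert s(x1, x2) (N.erase s(x, x1)) := by
        ext g
        simp only [Finset.mem_union, Finset.mem_sdiff, Finset.mem_singleton, Finset.mem_insert,
          Finset.mem_erase]
        tauto
      refine ⟨x2, {s(x, x1)}, {s(x1, x2)}, Finset.singleton_subset_iff.2 heN,
        Finset.singleton_subset_iff.2 hfM, ?_, ?_, ⟨_, Finset.mem_singleton_self _⟩,
        hx2x, h2, fun hexp => hexp _ hfM hx2f, ?_, ?_, ?_, ?_, ?_, ?_, ?_, ?_⟩
      · intro g hg
        rw [Finset.mem_singleton] at hg
        subst hg
        exact heM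
      · intro g hg
        rw [Finset.mem_singleton] at hg
        subst hg
        exact hfN
      · -- T-property
        intro g hg v hv
        rcases Finset.mem_union.1 hg with hg | hg <;> rw [Finset.mem_singleton] at hg <;> subst hg
        · rcases Sym2.mem_iff.1 hv with rfl | rfl
          · exact Or.inl rfl
          · exact Or.inr (Or.inr ⟨fun hexp => hexp _ hfM hx1f, fun hexp => hexp _ heN hx1e⟩)
        · rcases Sym2.mem_iff.1 hv with rfl | rfl
          · exact Or.inr (Or.inr ⟨fun hexp => hexp _ hfM hx1f, fun hexp => hexp _ heN hx1e⟩)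
          · exact Or.inr (Or.inl rfl)
      · rw [hsetM]
        exact ((hM.subset (Finset.erase_subset _ _)).insert_edge hadj1 hxs hx1s
          (expos_anti (Finset.erase_subset _ _) hx) hexpMex1).1
      · rw [hsetM, Finset.card_insert_of_notMem
          (fun h => (expos_anti (Finset.erase_subset _ _) hx) _ h hxe),
          Finset.card_erase_of_mem hfM]
        omega
      · rw [hsetM, expos_insert]
        exact ⟨hx2e, hexpMex2⟩
      · intro v hv hvx
        rw [hsetM, expos_insert]
        constructor
        · rw [Sym2.mem_iff]
          push_neg
          exact ⟨hvx, fun h => (h ▸ hv) _ hfM hx1f⟩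
        · exact expos_anti (Finset.erase_subset _ _) hv
      · rw [hsetN]
        exact ((hN.subset (Finset.erase_subset _ _)).insert_edge hadj2 hx1s hx2s
          hexpNex1 (expos_anti (Finset.erase_subset _ _) h2)).1
      · rw [hsetN, Finset.card_insert_of_notMem (fun h => hexpNex1 _ h hx1f),
          Finset.card_erase_of_mem heN]
        have : 1 ≤ N.card := Finset.card_pos.2 ⟨_, heN⟩
        omega
      · rw [hsetN, expos_insert]
        exact ⟨hxf, hexpNex⟩
    · -- recursive case
      have hexpN2x2 : ¬ expos (N.erase s(x, x1)) x2 := by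
        intro hexp
        apply h2
        intro g hg hx2g
        have hge : g ≠ s(x, x1) := fun h => hx2e (h ▸ hx2g)
        exact hexp g (Finset.mem_erase.2 ⟨hge, hg⟩) hx2g
      have hltc : (M.erase s(x1, x2)).card < c := by
        rw [Finset.card_erase_of_mem hfM]
        omega
      rcases ih _ hltc (M.erase s(x1, x2)) (N.erase s(x, x1)) x2 le_rfl
        (hM.subset (Finset.erase_subset _ _)) (hN.subset (Finset.erase_subset _ _))
        hexpMex2 hexpN2x2 with
        ⟨A₂, B₂, hA₂, hB₂, hmf₂, hcard₂⟩ |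
        ⟨w, A₂, B₂, hA₂, hB₂, hA₂M, hB₂N, hB₂ne, hwx2, hwN2, hwM2, hT₂, hmfM₂, hcardM₂,
          hexpw₂, hpres₂, hmfN₂, hcardN₂, hexpx₂⟩
      -- facts common to both branches
      all_goals
        (have hXx : expos ((M.erase s(x1, x2) \ B₂) ∪ A₂) x :=
          expos_union.2 ⟨expos_anti (Finset.sdiff_subset.trans (Finset.erase_subset _ _)) hx,
            fun g hg hxg => (Finset.mem_erase.1 (hA₂ hg)).1
              (huniqN g (Finset.mem_erase.1 (hA₂ hg)).2 hxg)⟩)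
      all_goals
        (have hXx1 : expos ((M.erase s(x1, x2) \ B₂) ∪ A₂) x1 :=
          expos_union.2 ⟨expos_anti Finset.sdiff_subset hexpMex1,
            fun g hg hx1g => (Finset.mem_erase.1 (hA₂ hg)).1
              (hN.unique (Finset.mem_erase.1 (hA₂ hg)).2 heN hx1g hx1e)⟩)
      all_goals
        (have hsetM : (M \ (insert s(x1, x2) B₂)) ∪ (insert s(x, x1) A₂)
            = insert s(x, x1) ((M.erase s(x1, x2) \ B₂) ∪ A₂) := by
          ext g;
          simp only [Finset.mem_union, Finset.mem_sdiff, Finset.mem_insert, Finset.mem_erase];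
          tauto)
      all_goals
        (have hsubA : insert s(x, x1) A₂ ⊆ N :=
          fun g hg => (Finset.mem_insert.1 hg).elim
            (fun h => by rw [h]; exact heN)
            (fun h => (Finset.erase_subset _ _) (hA₂ h)))
      all_goals
        (have hsubB : insert s(x1, x2) B₂ ⊆ M :=
          fun g hg => (Finset.mem_insert.1 hg).elim
            (fun h => by rw [h]; exact hfM)
            (fun h => (Finset.erase_subset _ _) (hB₂ h)))
      · -- augmenting case lifts
        left
        refine ⟨insert s(x, x1) A₂, insert s(x1, x2) B₂, hsubA, hsubB, ?_, ?_⟩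
        · rw [hsetM]
          exact (hmf₂.insert_edge hadj1 hxs hx1s hXx hXx1).1
        · rw [hsetM, Finset.card_insert_of_notMem (fun h => hXx _ h hxe), hcard₂,
            Finset.card_erase_of_mem hfM]
          omega
      · -- terminal case lifts
        right
        have hwx : w ≠ x := by
          intro h
          subst h
          exact hwM2 (expos_anti (Finset.erase_subset _ _) hx)
        have hwx1 : w ≠ x1 := by
          intro h
          subst h
          exact hwM2 hexpMex1
        have hwe : w ∉ s(x, x1) := by
          rw [Sym2.mem_iff]
          push_neg
          exact ⟨hwx, hwx1⟩
        have hwf : w ∉ s(x1, x2) := by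
          rw [Sym2.mem_iff]
          push_neg
          exact ⟨hwx1, hwx2⟩
        have hwN : expos N w := by
          intro g hg hwg
          have hge : g ≠ s(x, x1) := fun h => hwe (h ▸ hwg)
          exact hwN2 g (Finset.mem_erase.2 ⟨hge, hg⟩) hwg
        have hwM : ¬ expos M w := fun hexp => hwM2 (expos_anti (Finset.erase_subset _ _) hexp)
        have hsetN : (N \ (insert s(x, x1) A₂)) ∪ (insert s(x1, x2) B₂)
            = insert s(x1, x2) ((N.erase s(x, x1) \ A₂) ∪ B₂) := by
          ext g
          simp only [Finset.mem_union, Finset.mem_sdiff, Finset.mem_insert, Finset.mem_erase]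
          tauto
        have hYx1 : expos ((N.erase s(x, x1) \ A₂) ∪ B₂) x1 := by
          rw [expos_union]
          constructor
          · exact expos_anti Finset.sdiff_subset hexpNex1
          · intro g hg hx1g
            have hgM : g ∈ M.erase s(x1, x2) := hB₂ hg
            rw [Finset.mem_erase] at hgM
            exact hgM.1 (huniqM g hgM.2 hx1g)
        refine ⟨w, insert s(x, x1) A₂, insert s(x1, x2) B₂, hsubA, hsubB, ?_, ?_,
          ⟨_, Finset.mem_insert_self _ _⟩, hwx, hwN, hwM, ?_, ?_, ?_, ?_, ?_, ?_, ?_, ?_⟩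
        · intro g hg
          rcases Finset.mem_insert.1 hg with rfl | hg
          · exact heM
          · intro hgM
            have hgf : g ≠ s(x1, x2) := by
              intro h
              exact hfN ((Finset.erase_subset _ _) (h ▸ hA₂ hg))
            exact hA₂M g hg (Finset.mem_erase.2 ⟨hgf, hgM⟩)
        · intro g hg
          rcases Finset.mem_insert.1 hg with rfl | hg
          · exact hfN
          · intro hgN
            have hge : g ≠ s(x, x1) := by
              intro h
              exact heM ((Finset.erase_subset _ _) (h ▸ hB₂ hg))
            exact hB₂N g hg (Finset.mem_erase.2 ⟨hge, hgN⟩)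
        · -- T-property
          intro g hg v hv
          rcases Finset.mem_union.1 hg with hg | hg
          · rcases Finset.mem_insert.1 hg with rfl | hg
            · rcases Sym2.mem_iff.1 hv with rfl | rfl
              · exact Or.inl rfl
              · exact Or.inr (Or.inr ⟨fun hexp => hexp _ hfM hx1f, fun hexp => hexp _ heN hx1e⟩)
            · rcases hT₂ _ (Finset.mem_union_left _ hg) v hv with rfl | rfl | ⟨hm, hn⟩
              · exact Or.inr (Or.inr ⟨fun hexp => hexp _ hfM hx2f, h2⟩)
              · exact Or.inr (Or.inl rfl)
              · exact Or.inr (Or.inr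
                  ⟨fun hexp => hm (expos_anti (Finset.erase_subset _ _) hexp),
                   fun hexp => hn (expos_anti (Finset.erase_subset _ _) hexp)⟩)
          · rcases Finset.mem_insert.1 hg with rfl | hg
            · rcases Sym2.mem_iff.1 hv with rfl | rfl
              · exact Or.inr (Or.inr ⟨fun hexp => hexp _ hfM hx1f, fun hexp => hexp _ heN hx1e⟩)
              · exact Or.inr (Or.inr ⟨fun hexp => hexp _ hfM hx2f, h2⟩)
            · rcases hT₂ _ (Finset.mem_union_right _ hg) v hv with rfl | rfl | ⟨hm, hn⟩
              · exact Or.inr (Or.inr ⟨fun hexp => hexp _ hfM hx2f, h2⟩)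
              · exact Or.inr (Or.inl rfl)
              · exact Or.inr (Or.inr
                  ⟨fun hexp => hm (expos_anti (Finset.erase_subset _ _) hexp),
                   fun hexp => hn (expos_anti (Finset.erase_subset _ _) hexp)⟩)
        · rw [hsetM]
          exact (hmfM₂.insert_edge hadj1 hxs hx1s hXx hXx1).1
        · rw [hsetM, Finset.card_insert_of_notMem (fun h => hXx _ h hxe), hcardM₂,
            Finset.card_erase_of_mem hfM]
          omega
        · rw [hsetM, expos_insert]
          exact ⟨hwe, hexpw₂⟩
        · intro v hv hvx
          rw [hsetM, expos_insert]
          have hvx1 : v ≠ x1 := fun h => h1 (h ▸ hv)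
          have hvx2 : v ≠ x2 := fun h => (h ▸ hv) _ hfM hx2f
          constructor
          · rw [Sym2.mem_iff]
            push_neg
            exact ⟨hvx, hvx1⟩
          · exact hpres₂ v (expos_anti (Finset.erase_subset _ _) hv) hvx2
        · rw [hsetN]
          exact (hmfN₂.insert_edge hadj2 hx1s hx2s hYx1 hexpx₂).1
        · rw [hsetN, Finset.card_insert_of_notMem (fun h => hYx1 _ h hx1f), hcardN₂,
            Finset.card_erase_of_mem heN]
          have : 1 ≤ N.card := Finset.card_pos.2 ⟨_, heN⟩
          omega
        · rw [hsetN, expos_insert]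
          refine ⟨hxf, ?_⟩
          rw [expos_union]
          constructor
          · exact expos_anti Finset.sdiff_subset hexpNex
          · intro g hg hxg
            exact hx g ((Finset.erase_subset _ _) (hB₂ hg)) hxg


/-- All matchings of `G` within `s`, as a finset. -/
noncomputable def MSet (G : SimpleGraph V) (s : Finset V) : Finset (Finset (Sym2 V)) :=
  (ES G s).powerset.filter (fun m => IsMF G s m)

lemma mem_MSet {m : Finset (Sym2 V)} : m ∈ MSet G s ↔ IsMF G s m :=
  ⟨fun h => (Finset.mem_filter.1 h).2,
   fun h => Finset.mem_filter.2 ⟨Finset.mem_powerset.2 h.subset_ES, h⟩⟩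

lemma empty_isMF : IsMF G s (∅ : Finset (Sym2 V)) := by
  refine ⟨?_, ?_, ?_⟩ <;> simp

/-- The matching number of `G` within `s`. -/
noncomputable def nuF (G : SimpleGraph V) (s : Finset V) : ℕ :=
  ((MSet G s).image Finset.card).max' (Finset.Nonempty.image ⟨∅, mem_MSet.2 empty_isMF⟩ _)

lemma card_le_nuF {m : Finset (Sym2 V)} (h : IsMF G s m) : m.card ≤ nuF G s :=
  Finset.le_max' _ _ (Finset.mem_image_of_mem _ (mem_MSet.2 h))

lemma exists_nuF (G : SimpleGraph V) (s : Finset V) :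
    ∃ m, IsMF G s m ∧ m.card = nuF G s := by
  have := Finset.max'_mem ((MSet G s).image Finset.card)
    (Finset.Nonempty.image ⟨∅, mem_MSet.2 empty_isMF⟩ _)
  rw [Finset.mem_image] at this
  obtain ⟨m, hm, hcard⟩ := this
  exact ⟨m, mem_MSet.1 hm, hcard⟩

/-- If the matching leaves at least two vertices free, we can find two exposed vertices. -/
lemma exists_two_exposed {m : Finset (Sym2 V)} (h : IsMF G s m)
    (hcard : 2 * m.card + 2 ≤ s.card) :
    ∃ x ∈ s, ∃ y ∈ s, x ≠ y ∧ expos m x ∧ expos m y := by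
  have hsub : cover m ⊆ s := h.cover_subset
  have hc : (s \ cover m).card = s.card - 2 * m.card := by
    rw [Finset.card_sdiff_of_subset hsub, h.card_cover]
  have h2 : 1 < (s \ cover m).card := by omega
  obtain ⟨x, hx, y, hy, hxy⟩ := Finset.one_lt_card.1 h2
  rw [Finset.mem_sdiff] at hx hy
  exact ⟨x, hx.1, y, hy.1, hxy, expos_iff_not_mem_cover.2 hx.2, expos_iff_not_mem_cover.2 hy.2⟩

/-- The graph `G` restricted to the vertex set `s`. -/
def GS (G : SimpleGraph V) (s : Finset V) : SimpleGraph V where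
  Adj a b := G.Adj a b ∧ a ∈ s ∧ b ∈ s
  symm := ⟨fun a b h => ⟨h.1.symm, h.2.2, h.2.1⟩⟩
  loopless := ⟨fun a h => G.irrefl h.1⟩

set_option maxHeartbeats 1000000 in
/-- Gallai's argument: in a connected graph in which every vertex can be avoided by some
maximum matching, any maximum matching misses at most one vertex. -/
lemma gallai (G : SimpleGraph V) (s : Finset V) (k : ℕ)
    (hub : ∀ m, IsMF G s m → m.card ≤ k)
    (hav : ∀ v ∈ s, ∃ m, IsMF G (s.erase v) m ∧ m.card = k)
    (hconn : ∀ x ∈ s, ∀ y ∈ s, (GS G s).Reachable x y) :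
    s.card ≤ 2 * k + 1 := by
  by_contra hbig
  push_neg at hbig
  have hexpz : ∀ z : V, ∀ m' : Finset (Sym2 V), IsMF G (s.erase z) m' → expos m' z := by
    intro z m' hm' e he hze
    exact (Finset.mem_erase.1 (hm'.2.1 e he z hze)).1 rfl
  set D : Set ℕ := {d | ∃ m x y, IsMF G s m ∧ m.card = k ∧ x ∈ s ∧ y ∈ s ∧ x ≠ y ∧
      expos m x ∧ expos m y ∧ (GS G s).dist x y = d} with hDdef
  have hDne : D.Nonempty := by
    have hs0 : s.Nonempty := Finset.card_pos.1 (by omega)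
    obtain ⟨v, hv⟩ := hs0
    obtain ⟨m, hm, hmcard⟩ := hav v hv
    have hmS : IsMF G s m := hm.mono_s (Finset.erase_subset _ _)
    obtain ⟨x, hxs, y, hys, hxy, hex, hey⟩ := exists_two_exposed hmS (by omega)
    exact ⟨_, m, x, y, hmS, hmcard, hxs, hys, hxy, hex, hey, rfl⟩
  obtain ⟨M, x, y, hmS, hmcard, hxs, hys, hxy, hex, hey, hdist⟩ := Nat.sInf_mem hDne
  have hd2 : 2 ≤ sInf D := by
    have h1 : 0 < (GS G s).dist x y := (hconn x hxs y hys).pos_dist_of_ne hxy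
    rcases Nat.lt_or_ge (sInf D) 2 with h | h
    · exfalso
      obtain ⟨p, hp⟩ := (hconn x hxs y hys).exists_walk_length_eq_dist
      have hlen : p.length = 1 := by omega
      have hadj := p.adj_of_length_eq_one hlen
      have hins := hmS.insert_edge (show G.Adj x y ∧ x ∈ s ∧ y ∈ s from hadj).1 hxs hys hex hey
      have hcontra := hub _ hins.1
      rw [hins.2, hmcard] at hcontra
      omega
    · exact h
  obtain ⟨p, hp⟩ := (hconn x hxs y hys).exists_walk_length_eq_dist
  cases p with
  | nil =>
    rw [Walk.length_nil] at hp
    omega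
  | @cons _ z _ hxz q =>
    rw [Walk.length_cons] at hp
    have hzs : z ∈ s := (show G.Adj x z ∧ x ∈ s ∧ z ∈ s from hxz).2.2
    have hxnz : x ≠ z := hxz.ne
    have hzy : z ≠ y := by
      intro h
      subst h
      have := SimpleGraph.dist_le (Walk.cons hxz Walk.nil)
      rw [Walk.length_cons, Walk.length_nil] at this
      omega
    have hdxz : (GS G s).dist x z ≤ 1 := by
      have := SimpleGraph.dist_le (Walk.cons hxz Walk.nil)
      rwa [Walk.length_cons, Walk.length_nil] at this
    have hdzy : (GS G s).dist z y ≤ q.length := SimpleGraph.dist_le q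
    -- M covers z
    have hMz : ¬ expos M z := by
      intro hez
      have h1 := Nat.sInf_le (show (GS G s).dist x z ∈ D from
        ⟨M, x, z, hmS, hmcard, hxs, hzs, hxnz, hex, hez, rfl⟩)
      omega
    -- the matching avoiding z with maximal intersection with M
    obtain ⟨mz, hmz, hmzcard⟩ := hav z hzs
    set Cand := (ES G s).powerset.filter
      (fun m' => IsMF G (s.erase z) m' ∧ m'.card = k) with hCdef
    have hCandNe : Cand.Nonempty :=
      ⟨mz, Finset.mem_filter.2 ⟨Finset.mem_powerset.2
        ((hmz.mono_s (Finset.erase_subset _ _)).subset_ES), hmz, hmzcard⟩⟩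
    obtain ⟨N, hNC, hNmax⟩ := Finset.exists_max_image Cand (fun m' => (m' ∩ M).card) hCandNe
    have hN' := (Finset.mem_filter.1 hNC).2
    have hNS : IsMF G s N := hN'.1.mono_s (Finset.erase_subset _ _)
    have hNz : expos N z := hexpz z N hN'.1
    have hNx : ¬ expos N x := by
      intro hexpNx
      have h1 := Nat.sInf_le (show (GS G s).dist x z ∈ D from
        ⟨N, x, z, hNS, hN'.2, hxs, hzs, hxnz, hexpNx, hNz, rfl⟩)
      omega
    rcases SD G s M.card M N x le_rfl hmS hNS hex hNx with
      ⟨A, B, hAN, hBM, hmf, hcard⟩ |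
      ⟨w, A, B, hAN, hBM, hAM, hBN, hBne, hwx, hwN, hwM, hT, hmfM', hcardM', hexpM'w,
        hpresM', hmfN', hcardN', hexpN'x⟩
    · have hcontra := hub _ hmf
      rw [hcard, hmcard] at hcontra
      omega
    · by_cases hwz : w = z
      · subst hwz
        have hM'y : expos ((M \ B) ∪ A) y := hpresM' y hey (Ne.symm hxy)
        have h1 := Nat.sInf_le (show (GS G s).dist w y ∈ D from
          ⟨(M \ B) ∪ A, w, y, hmfM', by rw [hcardM', hmcard], hzs, hys, hzy, hexpM'w, hM'y, rfl⟩)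
        omega
      · have hN'z : ∀ g ∈ (N \ A) ∪ B, z ∉ g := by
          intro g hg hzg
          rcases Finset.mem_union.1 hg with hg | hg
          · exact hNz g (Finset.sdiff_subset hg) hzg
          · rcases hT g (Finset.mem_union_right _ hg) z hzg with h | h | ⟨_, hn⟩
            · exact hxnz h.symm
            · exact hwz h.symm
            · exact hn hNz
        have hN'mem : (N \ A) ∪ B ∈ Cand := by
          refine Finset.mem_filter.2 ⟨Finset.mem_powerset.2 hmfN'.subset_ES, ⟨?_, ?_⟩⟩
          · exact ⟨hmfN'.1, fun e he v hv => Finset.mem_erase.2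
              ⟨fun hvz => hN'z e he (hvz ▸ hv), hmfN'.2.1 e he v hv⟩, hmfN'.2.2⟩
          · rw [hcardN', hN'.2]
        have hgrow : (N ∩ M).card + B.card ≤ (((N \ A) ∪ B) ∩ M).card := by
          have hsub : (N ∩ M) ∪ B ⊆ ((N \ A) ∪ B) ∩ M := by
            intro g hg
            rcases Finset.mem_union.1 hg with hg | hg
            · rw [Finset.mem_inter] at hg ⊢
              exact ⟨Finset.mem_union_left _
                (Finset.mem_sdiff.2 ⟨hg.1, fun hA => hAM g hA hg.2⟩), hg.2⟩
            · exact Finset.mem_inter.2 ⟨Finset.mem_union_right _ hg, hBM hg⟩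
          have hdisj : Disjoint (N ∩ M) B :=
            Finset.disjoint_left.2 (fun {g} hg hgB => hBN g hgB (Finset.mem_inter.1 hg).1)
          calc (N ∩ M).card + B.card = ((N ∩ M) ∪ B).card :=
                (Finset.card_union_of_disjoint hdisj).symm
          _ ≤ _ := Finset.card_le_card hsub
        have hle := hNmax _ hN'mem
        have hB1 : 1 ≤ B.card := Finset.card_pos.2 hBne
        omega


lemma two_mul_choose_two (n : ℕ) : 2 * n.choose 2 = n * (n - 1) := by
  induction n with
  | zero => rfl
  | succ m ih =>
    rw [choose_two_succ, Nat.mul_add, ih, Nat.succ_sub_one]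
    cases m with
    | zero => rfl
    | succ t =>
      rw [Nat.succ_sub_one]
      ring

lemma two_mul_choose_two' (n : ℕ) : 2 * n.choose 2 + n = n * n := by
  have h := two_mul_choose_two n
  cases n with
  | zero => rfl
  | succ t =>
    rw [Nat.succ_sub_one] at h
    rw [h]
    ring

/-- Arithmetic for the vertex-deletion case. -/
lemma arithA (k n : ℕ) (hk : 1 ≤ k) (hn : 2 * k + 2 ≤ n) :
    max ((2 * (k - 1) + 1).choose 2) ((k - 1).choose 2 + (k - 1) * ((n - 1) - (k - 1)))
      + (n - 1)
      ≤ max ((2 * k + 1).choose 2) (k.choose 2 + k * (n - k)) := by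
  obtain ⟨j, rfl⟩ : ∃ j, k = j + 1 := ⟨k - 1, by omega⟩
  obtain ⟨m, hm, rfl⟩ : ∃ m, j + 2 ≤ m ∧ n = (j + 1) + m := ⟨n - (j + 1), by omega, by omega⟩
  have e1 : j + 1 - 1 = j := by omega
  have e2 : (j + 1 + m) - 1 = j + m := by omega
  have e3 : (j + m) - j = m := by omega
  have e4 : (j + 1 + m) - (j + 1) = m := by omega
  rw [e1, e2, e3, e4]
  have hbr2 : j.choose 2 + j * m + (j + m) = (j + 1).choose 2 + (j + 1) * m := by
    rw [choose_two_succ]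
    ring
  have key1 : (2 * j + 1).choose 2 + (j + m)
      ≤ max ((2 * (j + 1) + 1).choose 2) ((j + 1).choose 2 + (j + 1) * m) := by
    by_cases hc : m ≤ 3 * j + 3
    · refine le_trans ?_ (le_max_left _ _)
      have t1 := two_mul_choose_two' (2 * j + 1)
      have t3 := two_mul_choose_two' (2 * (j + 1) + 1)
      linarith [t1, t3, hc]
    · refine le_trans ?_ (le_max_right _ _)
      have hc' : 3 * j + 4 ≤ m := by omega
      have t1 := two_mul_choose_two' (2 * j + 1)
      have t2 := two_mul_choose_two' (j + 1)
      have hj : j * (3 * j + 4) ≤ j * m := Nat.mul_le_mul_left j hc'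
      linarith [hj, t1, t2]
  have key2 : j.choose 2 + j * m + (j + m)
      ≤ max ((2 * (j + 1) + 1).choose 2) ((j + 1).choose 2 + (j + 1) * m) := by
    rw [hbr2]
    exact le_max_right _ _
  omega

/-- Monotonicity of the bound in `k`. -/
lemma arithMono (n k k' : ℕ) (hkk : k' ≤ k) (hn : 2 * k ≤ n) :
    max ((2 * k' + 1).choose 2) (k'.choose 2 + k' * (n - k'))
      ≤ max ((2 * k + 1).choose 2) (k.choose 2 + k * (n - k)) := by
  apply max_le
  · exact le_trans (Nat.choose_le_choose 2 (by omega)) (le_max_left _ _)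
  · refine le_trans ?_ (le_max_right _ _)
    have h1 : k'.choose 2 ≤ k.choose 2 := Nat.choose_le_choose 2 hkk
    have h2 : k' * (n - k') ≤ k * (n - k) := by
      obtain ⟨d, rfl⟩ : ∃ d, k = k' + d := ⟨k - k', by omega⟩
      obtain ⟨m, hm, rfl⟩ : ∃ m, k' + d ≤ m ∧ n = (k' + d) + m :=
        ⟨n - (k' + d), by omega, by omega⟩
      have e1 : (k' + d + m) - k' = d + m := by omega
      have e2 : (k' + d + m) - (k' + d) = m := by omega
      rw [e1, e2]
      have : d * k' ≤ d * m := Nat.mul_le_mul_left d (by omega)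
      linarith [this]
    omega

/-- One mixed case of the composition inequality. -/
lemma arithComp12 (a b n1 n2 : ℕ) (h1 : 2 * a ≤ n1) (h2 : 2 * b ≤ n2) :
    (2 * a + 1).choose 2 + (b.choose 2 + b * (n2 - b))
      ≤ max ((2 * (a + b) + 1).choose 2)
          ((a + b).choose 2 + (a + b) * ((n1 + n2) - (a + b))) := by
  obtain ⟨p, rfl⟩ : ∃ p, n1 = 2 * a + p := ⟨n1 - 2 * a, by omega⟩
  obtain ⟨q, rfl⟩ : ∃ q, n2 = 2 * b + q := ⟨n2 - 2 * b, by omega⟩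
  have e1 : (2 * b + q) - b = b + q := by omega
  have e2 : ((2 * a + p) + (2 * b + q)) - (a + b) = a + b + p + q := by omega
  rw [e1, e2]
  have t1 := two_mul_choose_two' (2 * a + 1)
  have t2 := two_mul_choose_two' b
  have t3 := two_mul_choose_two' (2 * (a + b) + 1)
  have t4 := two_mul_choose_two' (a + b)
  by_cases hsp : 2 * q ≤ 8 * a + b + 3
  · refine le_trans ?_ (le_max_left _ _)
    have hb : b * (2 * q) ≤ b * (8 * a + b + 3) := Nat.mul_le_mul_left b hsp
    linarith [hb, t1, t2, t3]
  · refine le_trans ?_ (le_max_right _ _)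
    have hsp' : 8 * a + b + 4 ≤ 2 * q := by omega
    have ha : a * (8 * a + b + 4) ≤ a * (2 * q) := Nat.mul_le_mul_left a hsp'
    linarith [ha, t1, t2, t4, Nat.zero_le (b * p), Nat.zero_le (a * p),
      Nat.zero_le (a * a), Nat.zero_le (a * b), Nat.zero_le a, Nat.zero_le (a * q),
      Nat.zero_le (b * q), Nat.zero_le (b * b)]

/-- The composition inequality for disjoint unions. -/
lemma arithComp (a b n1 n2 : ℕ) (h1 : 2 * a ≤ n1) (h2 : 2 * b ≤ n2) :
    max ((2 * a + 1).choose 2) (a.choose 2 + a * (n1 - a))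
      + max ((2 * b + 1).choose 2) (b.choose 2 + b * (n2 - b))
      ≤ max ((2 * (a + b) + 1).choose 2)
          ((a + b).choose 2 + (a + b) * ((n1 + n2) - (a + b))) := by
  have case11 : (2 * a + 1).choose 2 + (2 * b + 1).choose 2
      ≤ max ((2 * (a + b) + 1).choose 2)
          ((a + b).choose 2 + (a + b) * ((n1 + n2) - (a + b))) := by
    refine le_trans ?_ (le_max_left _ _)
    have t1 := two_mul_choose_two' (2 * a + 1)
    have t2 := two_mul_choose_two' (2 * b + 1)
    have t3 := two_mul_choose_two' (2 * (a + b) + 1)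
    linarith [t1, t2, t3, Nat.zero_le (a * b)]
  have case12 := arithComp12 a b n1 n2 h1 h2
  have case21 : (a.choose 2 + a * (n1 - a)) + (2 * b + 1).choose 2
      ≤ max ((2 * (a + b) + 1).choose 2)
          ((a + b).choose 2 + (a + b) * ((n1 + n2) - (a + b))) := by
    have h := arithComp12 b a n2 n1 h2 h1
    rw [Nat.add_comm b a, Nat.add_comm n2 n1] at h
    omega
  have case22 : (a.choose 2 + a * (n1 - a)) + (b.choose 2 + b * (n2 - b))
      ≤ max ((2 * (a + b) + 1).choose 2)
          ((a + b).choose 2 + (a + b) * ((n1 + n2) - (a + b))) := by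
    refine le_trans ?_ (le_max_right _ _)
    obtain ⟨p, rfl⟩ : ∃ p, n1 = 2 * a + p := ⟨n1 - 2 * a, by omega⟩
    obtain ⟨q, rfl⟩ : ∃ q, n2 = 2 * b + q := ⟨n2 - 2 * b, by omega⟩
    have e0 : (2 * a + p) - a = a + p := by omega
    have e1 : (2 * b + q) - b = b + q := by omega
    have e2 : ((2 * a + p) + (2 * b + q)) - (a + b) = a + b + p + q := by omega
    rw [e0, e1, e2]
    have t2 := two_mul_choose_two' a
    have t3 := two_mul_choose_two' b
    have t4 := two_mul_choose_two' (a + b)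
    linarith [t2, t3, t4, Nat.zero_le (a * b), Nat.zero_le (a * q), Nat.zero_le (b * p)]
  omega


set_option maxHeartbeats 1000000 in
/-- The core of the Erdős–Gallai matching theorem, by strong induction on the vertex set. -/
lemma core (G : SimpleGraph V) : ∀ s : Finset V, ∀ k : ℕ,
    (∀ m, IsMF G s m → m.card ≤ k) → 2 * k ≤ s.card →
    (ES G s).card ≤ max ((2 * k + 1).choose 2) (k.choose 2 + k * (s.card - k)) := by
  intro s
  induction s using Finset.strongInductionOn with
  | _ s IH =>
  intro k hub hs
  by_cases hsmall : s.card ≤ 2 * k + 1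
  · calc (ES G s).card ≤ s.card.choose 2 := ES_card_le_choose G s
    _ ≤ (2 * k + 1).choose 2 := Nat.choose_le_choose 2 hsmall
    _ ≤ _ := le_max_left _ _
  push_neg at hsmall
  by_cases hk0 : k = 0
  · subst hk0
    have hES0 : ES G s = ∅ := by
      rw [Finset.eq_empty_iff_forall_notMem]
      intro e he
      rw [mem_ES] at he
      have hmf : IsMF G s {e} := by
        refine ⟨?_, ?_, ?_⟩
        · intro e' he'
          rw [Finset.mem_singleton] at he'
          exact he' ▸ he.1
        · intro e' he' v hv
          rw [Finset.mem_singleton] at he'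
          exact he.2 v (he' ▸ hv)
        · intro e1 h1 e2 h2 hne
          rw [Finset.mem_singleton] at h1 h2
          exact absurd (h1.trans h2.symm) hne
      have := hub _ hmf
      rw [Finset.card_singleton] at this
      omega
    simp [hES0]
  by_cases hA : ∃ v ∈ s, ∀ m, IsMF G (s.erase v) m → m.card ≤ k - 1
  · obtain ⟨v, hv, hubv⟩ := hA
    have hss : s.erase v ⊂ s := Finset.erase_ssubset hv
    have hcard_er : (s.erase v).card = s.card - 1 := Finset.card_erase_of_mem hv
    have hIH := IH _ hss (k - 1) hubv (by omega)
    have hdelta := ES_erase_card G hv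
    rw [hcard_er] at hIH
    have harith := arithA k s.card (by omega) (by omega)
    omega
  · push_neg at hA
    have hav : ∀ v ∈ s, ∃ m, IsMF G (s.erase v) m ∧ m.card = k := by
      intro v hv
      obtain ⟨m, hm, hmc⟩ := hA v hv
      have := hub m (hm.mono_s (Finset.erase_subset _ _))
      exact ⟨m, hm, by omega⟩
    by_cases hsplit : ∃ t ⊆ s, t.Nonempty ∧ (s \ t).Nonempty ∧
        ∀ a ∈ t, ∀ b ∈ s \ t, ¬ G.Adj a b
    · obtain ⟨t, hts, htne, hstne, hcross⟩ := hsplit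
      have hub1 : ∀ m, IsMF G t m → m.card ≤ nuF G t := fun m hm => card_le_nuF hm
      have hub2 : ∀ m, IsMF G (s \ t) m → m.card ≤ nuF G (s \ t) :=
        fun m hm => card_le_nuF hm
      obtain ⟨m1, hm1, hm1c⟩ := exists_nuF G t
      obtain ⟨m2, hm2, hm2c⟩ := exists_nuF G (s \ t)
      have h2k1 : 2 * nuF G t ≤ t.card := hm1c ▸ hm1.two_card_le
      have h2k2 : 2 * nuF G (s \ t) ≤ (s \ t).card := hm2c ▸ hm2.two_card_le
      have hk12 : nuF G t + nuF G (s \ t) ≤ k := by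
        have hdisj : ∀ v ∈ t, v ∉ s \ t := fun v hv hv' => (Finset.mem_sdiff.1 hv').2 hv
        have hu := hm1.union_disjoint hm2 hdisj
        have hsub : t ∪ (s \ t) = s := Finset.union_sdiff_of_subset hts
        have hle := hub _ (hsub ▸ hu.1)
        rw [hu.2, hm1c, hm2c] at hle
        exact hle
      have hES : (ES G s).card = (ES G t).card + (ES G (s \ t)).card := by
        have hdisj : Disjoint (ES G t) (ES G (s \ t)) := by
          rw [Finset.disjoint_left]
          intro e he he'
          rw [mem_ES] at he he'
          exact (Finset.mem_sdiff.1 (he'.2 _ (Sym2.out_fst_mem e))).2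
            (he.2 _ (Sym2.out_fst_mem e))
        have hunion : ES G s = ES G t ∪ ES G (s \ t) := by
          ext e
          induction e with
          | _ a b =>
            simp only [mem_ES, Finset.mem_union]
            constructor
            · rintro ⟨heE, hev⟩
              have hadj : G.Adj a b := G.mem_edgeSet.1 heE
              have has : a ∈ s := hev a (Sym2.mem_mk_left a b)
              have hbs : b ∈ s := hev b (Sym2.mem_mk_right a b)
              by_cases hat : a ∈ t
              · left
                refine ⟨heE, ?_⟩
                intro v hv
                rcases Sym2.mem_iff.1 hv with rfl | rfl
                · exact hat
                · by_contra hbt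
                  exact hcross a hat v (Finset.mem_sdiff.2 ⟨hbs, hbt⟩) hadj
              · right
                refine ⟨heE, ?_⟩
                have hbt : b ∉ t := by
                  intro hbt
                  exact hcross b hbt a (Finset.mem_sdiff.2 ⟨has, hat⟩) hadj.symm
                intro v hv
                rcases Sym2.mem_iff.1 hv with rfl | rfl
                · exact Finset.mem_sdiff.2 ⟨has, hat⟩
                · exact Finset.mem_sdiff.2 ⟨hbs, hbt⟩
            · rintro (⟨heE, hev⟩ | ⟨heE, hev⟩)
              · exact ⟨heE, fun v hv => hts (hev v hv)⟩
              · exact ⟨heE, fun v hv => (Finset.mem_sdiff.1 (hev v hv)).1⟩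
        rw [hunion, Finset.card_union_of_disjoint hdisj]
      obtain ⟨xw, hxw⟩ := hstne
      obtain ⟨yw, hyw⟩ := htne
      have hts1 : t ⊂ s := (Finset.ssubset_iff_of_subset hts).2
        ⟨xw, (Finset.mem_sdiff.1 hxw).1, (Finset.mem_sdiff.1 hxw).2⟩
      have hst1 : s \ t ⊂ s := (Finset.ssubset_iff_of_subset (Finset.sdiff_subset)).2
        ⟨yw, hts hyw, fun hc => (Finset.mem_sdiff.1 hc).2 hyw⟩
      have hI1 := IH t hts1 (nuF G t) hub1 h2k1
      have hI2 := IH _ hst1 (nuF G (s \ t)) hub2 h2k2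
      have hcomp := arithComp (nuF G t) (nuF G (s \ t)) t.card (s \ t).card h2k1 h2k2
      have hmono := arithMono s.card k (nuF G t + nuF G (s \ t)) hk12 (by omega)
      have hcards : t.card + (s \ t).card = s.card := by
        rw [Finset.card_sdiff_of_subset hts]
        have := Finset.card_le_card hts
        omega
      rw [hcards] at hcomp
      omega
    · exfalso
      have hreach : ∀ x ∈ s, ∀ y ∈ s, (GS G s).Reachable x y := by
        intro x hx y hy
        by_contra hnr
        apply hsplit
        refine ⟨s.filter (fun v => (GS G s).Reachable x v), Finset.filter_subset _ _,
          ⟨x, Finset.mem_filter.2 ⟨hx, Reachable.refl x⟩⟩,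
          ⟨y, Finset.mem_sdiff.2 ⟨hy, fun hyt => hnr (Finset.mem_filter.1 hyt).2⟩⟩, ?_⟩
        intro a ha b hb hadj
        rw [Finset.mem_filter] at ha
        rw [Finset.mem_sdiff] at hb
        exact hb.2 (Finset.mem_filter.2 ⟨hb.1,
          ha.2.trans (SimpleGraph.Adj.reachable (G := GS G s) ⟨hadj, ha.1, hb.1⟩)⟩)
      have := gallai G s k hub hav hreach
      omega

end ErdosGallaiAux

theorem erdos_gallai_matching {V : Type*} [Fintype V] (G : SimpleGraph V)
    (n : ℕ) (hn : n = Fintype.card V) (β : ℕ) (hβ : β = matchNum G) (h : n > 2 * β) :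
    Nat.card G.edgeSet ≤ max ((2 * β + 1).choose 2) (β.choose 2 + β * (n - β)) := by
  classical
  have hbridge : ∀ m : Finset (Sym2 V), ErdosGallaiAux.IsMF G Finset.univ m →
      m.card ≤ matchNum G := by
    intro m hm
    set M : G.Subgraph := {
      verts := {v | ∃ e ∈ m, v ∈ e}
      Adj := fun a b => s(a, b) ∈ m
      adj_sub := fun h' => G.mem_edgeSet.1 (hm.1 _ h')
      edge_vert := fun {a b} h' => ⟨s(a, b), h', Sym2.mem_mk_left a b⟩
      symm := ⟨fun a b h' => by show s(b, a) ∈ m; rw [Sym2.eq_swap]; exact h'⟩ } with hMdef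
    have hmatch : M.IsMatching := by
      intro v hv
      obtain ⟨e, he, hve⟩ := hv
      have hspec : s(v, Sym2.Mem.other' hve) = e := Sym2.other_spec' hve
      refine ⟨Sym2.Mem.other' hve, ?_, ?_⟩
      · show s(v, _) ∈ m
        rw [hspec]
        exact he
      · intro y hy
        have h1 : s(v, y) = e := hm.unique hy he (Sym2.mem_mk_left v y) hve
        rw [← hspec] at h1
        exact Sym2.congr_right.1 h1
    have hedge : M.edgeSet = (m : Set (Sym2 V)) := by
      ext e
      induction e with
      | _ a b =>
        rw [SimpleGraph.Subgraph.mem_edgeSet]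
        exact Iff.rfl
    have hcard : M.edgeSet.ncard = m.card := by rw [hedge, Set.ncard_coe_finset]
    have hbdd : BddAbove {k : ℕ | ∃ M : G.Subgraph, M.IsMatching ∧ M.edgeSet.ncard = k} := by
      refine ⟨Fintype.card (Sym2 V), fun c hc => ?_⟩
      obtain ⟨M', _, rfl⟩ := hc
      calc M'.edgeSet.ncard ≤ (Set.univ : Set (Sym2 V)).ncard :=
            Set.ncard_le_ncard (Set.subset_univ _) Set.finite_univ
      _ = Fintype.card (Sym2 V) := by rw [Set.ncard_univ, Nat.card_eq_fintype_card]
    exact le_csSup hbdd ⟨M, hmatch, hcard⟩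
  have hedgecount : Nat.card G.edgeSet = (ErdosGallaiAux.ES G Finset.univ).card := by
    rw [Nat.card_coe_set_eq]
    have hset : G.edgeSet = ↑(ErdosGallaiAux.ES G Finset.univ) := by
      ext e
      simp [ErdosGallaiAux.mem_ES]
    rw [hset, Set.ncard_coe_finset]
  have hcore := ErdosGallaiAux.core G Finset.univ β
    (fun m hm => by rw [hβ]; exact hbridge m hm)
    (by rw [Finset.card_univ, ← hn]; omega)
  rw [Finset.card_univ, ← hn] at hcore
  rw [hedgecount]
  exact hcore
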